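/- Let h : (0,∞) → ℂ be measurable with ∫₀^∞ |h(ρ)| ρ dρ < ∞ and consider the isotropic divergence free wavelet ψ̂(ξ) = −i h(|ξ|) e_θ(ξ) with e_θ(ξ) = (ξ₂, −ξ₁)/|ξ|. Then its unitary inverse Fourier transform is again isotropic and tangential: for every x ∈ ℝ² \ {0}, (2π)^{−1} ∫_{ℝ²} ψ̂(ξ) e^{i⟨ξ,x⟩} dξ = h₁(|x|) e_θ(x), where h₁(r) = ∫₀^∞ h(ρ) J₁(ρ r) ρ dρ and J₁(z) = (1/2π) ∫₀^{2π} e^{i(z sin φ − φ)} dφ. In particular the spatial wavelet is an isotropic vortex field h₁(|x|) e_{θ_x}. -/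

import Mathlib

open MeasureTheory RealInnerProductSpace

/-- The Bessel function of the first kind of order `1`. -/
noncomputable def besselJ1 (z : ℝ) : ℂ :=
  (2 * Real.pi)⁻¹ • ∫ φ in (0 : ℝ)..(2 * Real.pi),
    Complex.exp (Complex.I * ((z * Real.sin φ - φ : ℝ) : ℂ))

/-- The angular unit vector `e_θ(ξ) = (ξ₂, -ξ₁)/|ξ|`, viewed as a complex vector. -/
noncomputable def eThetaC (ξ : EuclideanSpace ℝ (Fin 2)) : Fin 2 → ℂ :=
  ![((ξ 1 / ‖ξ‖ : ℝ) : ℂ), ((-ξ 0 / ‖ξ‖ : ℝ) : ℂ)]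

open Real Complex intervalIntegral

lemma contIC (z : ℝ) : Continuous fun φ : ℝ => Complex.exp (Complex.I * z * Real.sin φ) * Real.cos φ := by
  fun_prop

lemma intCos (z : ℝ) :
    (∫ φ in (0:ℝ)..(2*Real.pi), Complex.exp (Complex.I * z * Real.sin φ) * Real.cos φ) = 0 := by
  rcases eq_or_ne z 0 with rfl | hz
  · simp only [Complex.ofReal_zero, mul_zero, zero_mul, Complex.exp_zero, one_mul]
    rw [intervalIntegral.integral_ofReal]
    simp [integral_cos]
  · have hder : ∀ φ ∈ Set.uIcc (0:ℝ) (2*Real.pi),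
        HasDerivAt (fun φ : ℝ => Complex.exp (Complex.I * z * Real.sin φ))
          (Complex.exp (Complex.I * z * Real.sin φ) * (Complex.I * z * Real.cos φ)) φ := by
      intro φ _
      have h1 : HasDerivAt (fun φ : ℝ => ((Real.sin φ : ℝ) : ℂ)) (Real.cos φ) φ :=
        (Real.hasDerivAt_sin φ).ofReal_comp
      have h2 := h1.const_mul (Complex.I * z)
      have h3 := h2.cexp
      simpa [mul_comm, mul_assoc, mul_left_comm] using h3
    have := intervalIntegral.integral_eq_sub_of_hasDerivAt hder
      ((by fun_prop : Continuous fun φ : ℝ => Complex.exp (Complex.I * z * Real.sin φ) *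
        (Complex.I * z * Real.cos φ)).intervalIntegrable _ _)
    simp only [Real.sin_two_pi, Real.sin_zero, Complex.ofReal_zero, mul_zero,
      Complex.exp_zero, sub_self] at this
    have h4 : (∫ φ in (0:ℝ)..(2*Real.pi),
        Complex.exp (Complex.I * z * Real.sin φ) * (Complex.I * z * Real.cos φ)) =
        (Complex.I * z) * ∫ φ in (0:ℝ)..(2*Real.pi),
          Complex.exp (Complex.I * z * Real.sin φ) * Real.cos φ := by
      rw [← intervalIntegral.integral_const_mul]
      congr 1; funext φ; ring
    rw [h4] at this
    have hIz : (Complex.I * z) ≠ 0 := by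
      simp [Complex.I_ne_zero, Complex.ofReal_ne_zero, hz]
    exact (mul_eq_zero.mp this).resolve_left hIz

lemma intSin (z : ℝ) :
    (∫ φ in (0:ℝ)..(2*Real.pi), Complex.exp (Complex.I * z * Real.sin φ) * Real.sin φ)
      = 2 * Real.pi * Complex.I * besselJ1 z := by
  have key : ∀ φ : ℝ, Complex.exp (Complex.I * ((z * Real.sin φ - φ : ℝ) : ℂ))
      = Complex.exp (Complex.I * z * Real.sin φ) * Real.cos φ
        - Complex.I * (Complex.exp (Complex.I * z * Real.sin φ) * Real.sin φ) := by
    intro φ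
    have : Complex.I * ((z * Real.sin φ - φ : ℝ) : ℂ)
        = Complex.I * z * Real.sin φ + (-φ : ℝ) * Complex.I := by push_cast; ring
    rw [this, Complex.exp_add, Complex.exp_mul_I]
    simp only [Complex.sin_neg, Complex.cos_neg, ← Complex.ofReal_cos, ← Complex.ofReal_sin, Real.sin_neg, Real.cos_neg, Complex.ofReal_neg]
    ring
  have hsplit : (∫ φ in (0:ℝ)..(2*Real.pi),
      Complex.exp (Complex.I * ((z * Real.sin φ - φ : ℝ) : ℂ)))
      = (∫ φ in (0:ℝ)..(2*Real.pi), Complex.exp (Complex.I * z * Real.sin φ) * Real.cos φ)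
        - Complex.I * ∫ φ in (0:ℝ)..(2*Real.pi),
            Complex.exp (Complex.I * z * Real.sin φ) * Real.sin φ := by
    rw [← intervalIntegral.integral_const_mul, ← intervalIntegral.integral_sub
      ((by fun_prop : Continuous fun φ : ℝ =>
        Complex.exp (Complex.I * z * Real.sin φ) * Real.cos φ).intervalIntegrable _ _)
      ((by fun_prop : Continuous fun φ : ℝ =>
        Complex.I * (Complex.exp (Complex.I * z * Real.sin φ) * Real.sin φ)).intervalIntegrable _ _)]
    simp_rw [key]
  rw [intCos, zero_sub] at hsplit
  set S := ∫ φ in (0:ℝ)..(2*Real.pi), Complex.exp (Complex.I * z * Real.sin φ) * Real.sin φ with hS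
  have h2π : (2 * Real.pi : ℝ) ≠ 0 := by positivity
  have hb : besselJ1 z = (2 * Real.pi : ℝ)⁻¹ • (-(Complex.I * S)) := by
    rw [besselJ1, hsplit]
  rw [hb, Complex.real_smul]
  have hI := Complex.I_mul_I
  have hπ : ((Real.pi : ℂ)) ≠ 0 := by
    exact_mod_cast Complex.ofReal_ne_zero.mpr Real.pi_ne_zero
  push_cast
  field_simp
  linear_combination S * hI

lemma perSin (z : ℝ) : Function.Periodic
    (fun u : ℝ => Complex.exp (Complex.I * z * Real.sin u) * Real.sin u) (2*Real.pi) := by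
  intro u; simp [Real.sin_add_two_pi]

lemma perCos (z : ℝ) : Function.Periodic
    (fun u : ℝ => Complex.exp (Complex.I * z * Real.sin u) * Real.cos u) (2*Real.pi) := by
  intro u; simp [Real.sin_add_two_pi, Real.cos_add_two_pi]

lemma baseCos (z : ℝ) :
    (∫ θ in (0:ℝ)..(2*Real.pi), Complex.exp (Complex.I * z * Real.cos θ) * Real.cos θ)
      = 2 * Real.pi * Complex.I * besselJ1 z := by
  have h1 : (∫ θ in (0:ℝ)..(2*Real.pi),
      (fun u : ℝ => Complex.exp (Complex.I * z * Real.sin u) * Real.sin u) (Real.pi/2 - θ))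
      = ∫ u in (Real.pi/2 - 2*Real.pi)..(Real.pi/2 - 0),
        Complex.exp (Complex.I * z * Real.sin u) * Real.sin u :=
    intervalIntegral.integral_comp_sub_left
      (fun u : ℝ => Complex.exp (Complex.I * z * Real.sin u) * Real.sin u) _
  simp only [Real.sin_pi_div_two_sub] at h1
  rw [← intSin z, h1]
  have h2 := (perSin z).intervalIntegral_add_eq (Real.pi/2 - 2*Real.pi) 0
  rw [show Real.pi/2 - 2*Real.pi + 2*Real.pi = Real.pi/2 - 0 by ring, zero_add] at h2
  exact h2

lemma baseSin (z : ℝ) :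
    (∫ θ in (0:ℝ)..(2*Real.pi), Complex.exp (Complex.I * z * Real.cos θ) * Real.sin θ) = 0 := by
  have h1 : (∫ θ in (0:ℝ)..(2*Real.pi),
      (fun u : ℝ => Complex.exp (Complex.I * z * Real.sin u) * Real.cos u) (Real.pi/2 - θ))
      = ∫ u in (Real.pi/2 - 2*Real.pi)..(Real.pi/2 - 0),
        Complex.exp (Complex.I * z * Real.sin u) * Real.cos u :=
    intervalIntegral.integral_comp_sub_left
      (fun u : ℝ => Complex.exp (Complex.I * z * Real.sin u) * Real.cos u) _
  simp only [Real.sin_pi_div_two_sub, Real.cos_pi_div_two_sub] at h1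
  rw [← intCos z, h1]
  have h2 := (perCos z).intervalIntegral_add_eq (Real.pi/2 - 2*Real.pi) 0
  rw [show Real.pi/2 - 2*Real.pi + 2*Real.pi = Real.pi/2 - 0 by ring, zero_add] at h2
  exact h2

lemma angSin (z α : ℝ) :
    (∫ θ in (-Real.pi)..Real.pi, Complex.exp (Complex.I * z * Real.cos (θ - α)) * Real.sin θ)
      = 2 * Real.pi * Complex.I * besselJ1 z * Real.sin α := by
  have h1 : (∫ u in (-Real.pi - α)..(Real.pi - α),
      (fun θ : ℝ => Complex.exp (Complex.I * z * Real.cos (θ - α)) * Real.sin θ) (u + α))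
      = ∫ θ in (-Real.pi - α + α)..(Real.pi - α + α),
        Complex.exp (Complex.I * z * Real.cos (θ - α)) * Real.sin θ :=
    intervalIntegral.integral_comp_add_right
      (fun θ : ℝ => Complex.exp (Complex.I * z * Real.cos (θ - α)) * Real.sin θ) _
  rw [show -Real.pi - α + α = -Real.pi by ring, show Real.pi - α + α = Real.pi by ring] at h1
  rw [← h1]
  simp only [add_sub_cancel_right, Real.sin_add]
  have hg : (fun u : ℝ => Complex.exp (Complex.I * z * Real.cos u) *
      ((Real.sin u * Real.cos α + Real.cos u * Real.sin α : ℝ) : ℂ)) =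
      fun u : ℝ => (Real.cos α : ℂ) * (Complex.exp (Complex.I * z * Real.cos u) * Real.sin u)
        + (Real.sin α : ℂ) * (Complex.exp (Complex.I * z * Real.cos u) * Real.cos u) := by
    funext u; push_cast; ring
  rw [hg]
  have hper : Function.Periodic
      (fun u : ℝ => (Real.cos α : ℂ) * (Complex.exp (Complex.I * z * Real.cos u) * Real.sin u)
        + (Real.sin α : ℂ) * (Complex.exp (Complex.I * z * Real.cos u) * Real.cos u))
      (2*Real.pi) := by
    intro u; simp [Real.sin_add_two_pi, Real.cos_add_two_pi]
  have h2 := hper.intervalIntegral_add_eq (-Real.pi - α) 0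
  rw [show -Real.pi - α + 2*Real.pi = Real.pi - α by ring, zero_add] at h2
  rw [h2, intervalIntegral.integral_add
    (((by fun_prop : Continuous fun u : ℝ => (Real.cos α : ℂ) *
      (Complex.exp (Complex.I * z * Real.cos u) * Real.sin u))).intervalIntegrable _ _)
    (((by fun_prop : Continuous fun u : ℝ => (Real.sin α : ℂ) *
      (Complex.exp (Complex.I * z * Real.cos u) * Real.cos u))).intervalIntegrable _ _),
    intervalIntegral.integral_const_mul, intervalIntegral.integral_const_mul,
    baseSin, baseCos]
  ring

lemma angCos (z α : ℝ) :
    (∫ θ in (-Real.pi)..Real.pi, Complex.exp (Complex.I * z * Real.cos (θ - α)) * Real.cos θ)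
      = 2 * Real.pi * Complex.I * besselJ1 z * Real.cos α := by
  have h1 : (∫ u in (-Real.pi - α)..(Real.pi - α),
      (fun θ : ℝ => Complex.exp (Complex.I * z * Real.cos (θ - α)) * Real.cos θ) (u + α))
      = ∫ θ in (-Real.pi - α + α)..(Real.pi - α + α),
        Complex.exp (Complex.I * z * Real.cos (θ - α)) * Real.cos θ :=
    intervalIntegral.integral_comp_add_right
      (fun θ : ℝ => Complex.exp (Complex.I * z * Real.cos (θ - α)) * Real.cos θ) _
  rw [show -Real.pi - α + α = -Real.pi by ring, show Real.pi - α + α = Real.pi by ring] at h1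
  rw [← h1]
  simp only [add_sub_cancel_right, Real.cos_add]
  have hg : (fun u : ℝ => Complex.exp (Complex.I * z * Real.cos u) *
      ((Real.cos u * Real.cos α - Real.sin u * Real.sin α : ℝ) : ℂ)) =
      fun u : ℝ => (Real.cos α : ℂ) * (Complex.exp (Complex.I * z * Real.cos u) * Real.cos u)
        - (Real.sin α : ℂ) * (Complex.exp (Complex.I * z * Real.cos u) * Real.sin u) := by
    funext u; push_cast; ring
  rw [hg]
  have hper : Function.Periodic
      (fun u : ℝ => (Real.cos α : ℂ) * (Complex.exp (Complex.I * z * Real.cos u) * Real.cos u)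
        - (Real.sin α : ℂ) * (Complex.exp (Complex.I * z * Real.cos u) * Real.sin u))
      (2*Real.pi) := by
    intro u; simp [Real.sin_add_two_pi, Real.cos_add_two_pi]
  have h2 := hper.intervalIntegral_add_eq (-Real.pi - α) 0
  rw [show -Real.pi - α + 2*Real.pi = Real.pi - α by ring, zero_add] at h2
  rw [h2, intervalIntegral.integral_sub
    (((by fun_prop : Continuous fun u : ℝ => (Real.cos α : ℂ) *
      (Complex.exp (Complex.I * z * Real.cos u) * Real.cos u))).intervalIntegrable _ _)
    (((by fun_prop : Continuous fun u : ℝ => (Real.sin α : ℂ) *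
      (Complex.exp (Complex.I * z * Real.cos u) * Real.sin u))).intervalIntegrable _ _),
    intervalIntegral.integral_const_mul, intervalIntegral.integral_const_mul,
    baseCos, baseSin]
  ring

noncomputable def E2 : (ℝ × ℝ) ≃ᵐ EuclideanSpace ℝ (Fin 2) :=
  MeasurableEquiv.finTwoArrow.symm.trans (MeasurableEquiv.toLp 2 (Fin 2 → ℝ))

lemma E2_mp : MeasurePreserving (E2 : ℝ × ℝ → EuclideanSpace ℝ (Fin 2)) volume volume :=
  ((EuclideanSpace.volume_preserving_symm_measurableEquiv_toLp (Fin 2)).symm).comp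
    (volume_preserving_finTwoArrow ℝ).symm

lemma norm2 (ξ : EuclideanSpace ℝ (Fin 2)) : ‖ξ‖ = Real.sqrt (ξ 0 ^2 + ξ 1 ^2) := by
  rw [EuclideanSpace.norm_eq]; simp [Fin.sum_univ_two]

lemma abs_coord_le (ξ : EuclideanSpace ℝ (Fin 2)) (i : Fin 2) : |ξ i| ≤ ‖ξ‖ := by
  rw [norm2, ← Real.sqrt_sq_eq_abs]
  apply Real.sqrt_le_sqrt
  fin_cases i <;> simp only [Fin.mk_zero, Fin.mk_one, Fin.isValue] <;>
    nlinarith [sq_nonneg (ξ 0), sq_nonneg (ξ 1)]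

lemma norm_eThetaC_le (ξ : EuclideanSpace ℝ (Fin 2)) : ‖eThetaC ξ‖ ≤ 1 := by
  rcases eq_or_ne ‖ξ‖ 0 with hξ | hξ
  · have : eThetaC ξ = ![(0:ℂ), 0] := by
      unfold eThetaC; rw [hξ]; simp
    rw [this]
    rw [pi_norm_le_iff_of_nonneg zero_le_one]
    intro i; fin_cases i <;> simp
  · have hpos : 0 < ‖ξ‖ := lt_of_le_of_ne (norm_nonneg ξ) (Ne.symm hξ)
    rw [pi_norm_le_iff_of_nonneg zero_le_one]
    intro i
    fin_cases i <;>
      simp only [eThetaC, Fin.mk_zero, Fin.mk_one, Fin.isValue, Matrix.cons_val_zero,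
        Matrix.cons_val_one, Matrix.head_cons,
        Complex.norm_real, Real.norm_eq_abs, abs_div, abs_neg, abs_norm] <;>
      rw [div_le_one hpos]
    · exact abs_coord_le ξ 1
    · exact abs_coord_le ξ 0

lemma measurable_eThetaC : Measurable eThetaC := by
  rw [measurable_pi_iff]
  intro i
  have h0 : Measurable fun ξ : EuclideanSpace ℝ (Fin 2) => ξ 0 :=
    (EuclideanSpace.proj (0 : Fin 2)).continuous.measurable
  have h1 : Measurable fun ξ : EuclideanSpace ℝ (Fin 2) => ξ 1 :=
    (EuclideanSpace.proj (1 : Fin 2)).continuous.measurable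
  have hn : Measurable fun ξ : EuclideanSpace ℝ (Fin 2) => ‖ξ‖ := measurable_norm
  fin_cases i <;> simp only [eThetaC, Fin.mk_zero, Fin.mk_one, Fin.isValue,
    Matrix.cons_val_zero, Matrix.cons_val_one, Matrix.head_cons]
  · exact Complex.measurable_ofReal.comp (h1.div hn)
  · exact Complex.measurable_ofReal.comp ((h0.neg).div hn)

/-- The inverse Fourier transform of the isotropic divergence free wavelet
`ψ̂(ξ) = -i h(|ξ|) e_θ(ξ)` is the isotropic vortex field `h₁(|x|) e_θ(x)`. -/
theorem stmt_12 (h : ℝ → ℂ) (hmeas : Measurable h)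
    (hint : IntegrableOn (fun ρ : ℝ => ‖h ρ‖ * ρ) (Set.Ioi (0 : ℝ)))
    (x : EuclideanSpace ℝ (Fin 2)) (hx : x ≠ 0) :
    (2 * Real.pi)⁻¹ • ∫ ξ : EuclideanSpace ℝ (Fin 2),
        Complex.exp (Complex.I * ((⟪ξ, x⟫ : ℝ) : ℂ)) • (((-Complex.I) * h ‖ξ‖) • eThetaC ξ)
      = (∫ ρ in Set.Ioi (0 : ℝ), h ρ * besselJ1 (ρ * ‖x‖) * (ρ : ℂ)) • eThetaC x := by
  have hr : 0 < ‖x‖ := norm_pos_iff.mpr hx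
  set F : EuclideanSpace ℝ (Fin 2) → Fin 2 → ℂ := fun ξ =>
    Complex.exp (Complex.I * ((⟪ξ, x⟫ : ℝ) : ℂ)) • (((-Complex.I) * h ‖ξ‖) • eThetaC ξ) with hF
  -- polar angle of x
  set α : ℝ := Complex.arg (x 0 + x 1 * Complex.I) with hα
  have habs : ‖(x 0 + x 1 * Complex.I : ℂ)‖ = ‖x‖ := by
    rw [Complex.norm_add_mul_I, ← norm2]
  have hz0 : (x 0 + x 1 * Complex.I : ℂ) ≠ 0 := by
    intro hc
    rw [hc] at habs
    simp only [norm_zero] at habs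
    exact hr.ne habs
  have hcosα : Real.cos α = x 0 / ‖x‖ := by
    rw [hα, Complex.cos_arg hz0, habs]; simp
  have hsinα : Real.sin α = x 1 / ‖x‖ := by
    rw [hα, Complex.sin_arg, habs]; simp
  have hx0 : x 0 = ‖x‖ * Real.cos α := by rw [hcosα]; field_simp
  have hx1 : x 1 = ‖x‖ * Real.sin α := by rw [hsinα]; field_simp
  -- geometric facts at polar points
  have hnormE : ∀ ρ θ : ℝ, 0 < ρ → ‖E2 (polarCoord.symm (ρ, θ))‖ = ρ := by
    intro ρ θ hρ
    have h0 : E2 (polarCoord.symm (ρ, θ)) 0 = ρ * Real.cos θ := rfl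
    have h1 : E2 (polarCoord.symm (ρ, θ)) 1 = ρ * Real.sin θ := rfl
    rw [norm2, h0, h1]
    have : (ρ * Real.cos θ) ^ 2 + (ρ * Real.sin θ) ^ 2 = ρ ^ 2 := by
      have := Real.sin_sq_add_cos_sq θ; nlinarith
    rw [this, Real.sqrt_sq hρ.le]
  have hinner : ∀ ρ θ : ℝ, (⟪E2 (polarCoord.symm (ρ, θ)), x⟫ : ℝ)
      = ρ * ‖x‖ * Real.cos (θ - α) := by
    intro ρ θ
    have h0 : E2 (polarCoord.symm (ρ, θ)) 0 = ρ * Real.cos θ := rfl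
    have h1 : E2 (polarCoord.symm (ρ, θ)) 1 = ρ * Real.sin θ := rfl
    rw [PiLp.inner_apply]
    simp only [Fin.sum_univ_two, RCLike.inner_apply, conj_trivial, h0, h1]
    rw [hx0, hx1, Real.cos_sub]
    ring
  -- the integrand composed with polar coordinates
  have hFpolar : ∀ ρ : ℝ, 0 < ρ → ∀ θ : ℝ,
      ρ • F (E2 (polarCoord.symm (ρ, θ)))
        = ((ρ * (-Complex.I * h ρ)) *
            (Complex.exp (Complex.I * ((ρ * ‖x‖ : ℝ) : ℂ) * (Real.cos (θ - α) : ℂ))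
              * (Real.sin θ : ℂ))) • ![(1:ℂ), 0]
          + ((ρ * (-Complex.I * h ρ)) *
            (Complex.exp (Complex.I * ((ρ * ‖x‖ : ℝ) : ℂ) * (Real.cos (θ - α) : ℂ))
              * (Real.cos θ : ℂ))) • ![(0:ℂ), -1] := by
    intro ρ hρ θ
    have h0 : E2 (polarCoord.symm (ρ, θ)) 0 = ρ * Real.cos θ := rfl
    have h1 : E2 (polarCoord.symm (ρ, θ)) 1 = ρ * Real.sin θ := rfl
    have hexp : Complex.exp (Complex.I * ((⟪E2 (polarCoord.symm (ρ, θ)), x⟫ : ℝ) : ℂ))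
        = Complex.exp (Complex.I * ((ρ * ‖x‖ : ℝ) : ℂ) * (Real.cos (θ - α) : ℂ)) := by
      rw [hinner ρ θ]; push_cast; ring_nf
    have het : eThetaC (E2 (polarCoord.symm (ρ, θ))) = ![(Real.sin θ : ℂ), (-Real.cos θ : ℂ)] := by
      unfold eThetaC
      rw [hnormE ρ θ hρ, h0, h1]
      have e1 : ρ * Real.sin θ / ρ = Real.sin θ := by field_simp
      have e2 : -(ρ * Real.cos θ) / ρ = -Real.cos θ := by field_simp
      rw [e1, e2]
      push_cast
      rfl
    simp only [hF]
    rw [hexp, het, hnormE ρ θ hρ]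
    funext i
    fin_cases i <;>
      simp only [Pi.smul_apply, Pi.add_apply, smul_eq_mul, Complex.real_smul,
        Matrix.cons_val_zero, Matrix.cons_val_one, Matrix.head_cons,
        Fin.mk_zero, Fin.mk_one, Fin.isValue, mul_zero, mul_one, add_zero, zero_add,
        mul_neg, neg_mul, Complex.ofReal_neg] <;>
      ring
  -- the inner (angular) integral
  have hInnerInt : ∀ ρ ∈ Set.Ioi (0:ℝ),
      (∫ θ in Set.Ioo (-Real.pi) Real.pi, ρ • F (E2 (polarCoord.symm (ρ, θ))))
        = (2 * Real.pi * (h ρ * besselJ1 (ρ * ‖x‖) * ρ)) • eThetaC x := by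
    intro ρ hρ
    rw [← MeasureTheory.integral_Ioc_eq_integral_Ioo,
      ← intervalIntegral.integral_of_le (by linarith [Real.pi_pos] : (-Real.pi) ≤ Real.pi)]
    simp_rw [hFpolar ρ (Set.mem_Ioi.mp hρ)]
    rw [intervalIntegral.integral_add
      ((by fun_prop : Continuous fun θ : ℝ => ((ρ * (-Complex.I * h ρ)) *
        (Complex.exp (Complex.I * ((ρ * ‖x‖ : ℝ) : ℂ) * (Real.cos (θ - α) : ℂ))
          * (Real.sin θ : ℂ))) • ![(1:ℂ), 0]).intervalIntegrable _ _)
      ((by fun_prop : Continuous fun θ : ℝ => ((ρ * (-Complex.I * h ρ)) *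
        (Complex.exp (Complex.I * ((ρ * ‖x‖ : ℝ) : ℂ) * (Real.cos (θ - α) : ℂ))
          * (Real.cos θ : ℂ))) • ![(0:ℂ), -1]).intervalIntegrable _ _),
      intervalIntegral.integral_smul_const, intervalIntegral.integral_smul_const,
      intervalIntegral.integral_const_mul, intervalIntegral.integral_const_mul,
      angSin (ρ * ‖x‖) α, angCos (ρ * ‖x‖) α]
    have hetx : eThetaC x = ![(Real.sin α : ℂ), (-Real.cos α : ℂ)] := by
      unfold eThetaC
      rw [hsinα, hcosα]
      push_cast
      rw [neg_div]
    rw [hetx]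
    funext i
    fin_cases i <;>
      simp only [Pi.smul_apply, Pi.add_apply, smul_eq_mul,
        Matrix.cons_val_zero, Matrix.cons_val_one, Matrix.head_cons,
        Fin.mk_zero, Fin.mk_one, Fin.isValue, mul_zero, mul_one, add_zero, zero_add,
        mul_neg, neg_mul, Complex.ofReal_neg]
    · linear_combination (-(2*(Real.pi:ℂ) * ρ * h ρ * besselJ1 (ρ * ‖x‖) * Real.sin α))
        * Complex.I_mul_I
    · linear_combination ((2*(Real.pi:ℂ) * ρ * h ρ * besselJ1 (ρ * ‖x‖) * Real.cos α))
        * Complex.I_mul_I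
  -- measurability
  have hm1 : Measurable fun p : ℝ × ℝ => E2 (polarCoord.symm p) := by
    have hps : Measurable fun p : ℝ × ℝ => (polarCoord.symm p : ℝ × ℝ) := by
      show Measurable fun p : ℝ × ℝ => (p.1 * Real.cos p.2, p.1 * Real.sin p.2)
      fun_prop
    exact E2.measurable.comp hps
  have hFm : Measurable F := by
    have m_in : Measurable fun ξ : EuclideanSpace ℝ (Fin 2) => (⟪ξ, x⟫ : ℝ) :=
      (continuous_id.inner continuous_const).measurable
    have m_exp : Measurable fun ξ : EuclideanSpace ℝ (Fin 2) =>
        Complex.exp (Complex.I * ((⟪ξ, x⟫ : ℝ) : ℂ)) :=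
      Complex.measurable_exp.comp (measurable_const.mul (Complex.measurable_ofReal.comp m_in))
    have m_h : Measurable fun ξ : EuclideanSpace ℝ (Fin 2) => (-Complex.I) * h ‖ξ‖ :=
      measurable_const.mul (hmeas.comp measurable_norm)
    exact m_exp.smul (m_h.smul measurable_eThetaC)
  have hGm : Measurable fun p : ℝ × ℝ => p.1 • F (E2 (polarCoord.symm p)) :=
    measurable_fst.smul (hFm.comp hm1)
  -- integrability on the polar target
  have hInt : IntegrableOn (fun p : ℝ × ℝ => p.1 • F (E2 (polarCoord.symm p)))
      (Set.Ioi (0:ℝ) ×ˢ Set.Ioo (-Real.pi) Real.pi) (volume.prod volume) := by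
    rw [IntegrableOn, ← Measure.prod_restrict]
    apply Integrable.mono' (g := fun p : ℝ × ℝ => ‖h p.1‖ * p.1)
    · have hone : IntegrableOn (fun _ : ℝ => (1:ℝ)) (Set.Ioo (-Real.pi) Real.pi) volume :=
        integrableOn_const measure_Ioo_lt_top.ne
      have := hint.mul_prod hone
      simpa using this
    · exact hGm.aestronglyMeasurable
    · rw [Measure.prod_restrict]
      filter_upwards [ae_restrict_mem (measurableSet_Ioi.prod measurableSet_Ioo)] with p hp
      obtain ⟨hp1, _⟩ := hp
      have hp1' : (0:ℝ) < p.1 := hp1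
      rw [norm_smul, Real.norm_eq_abs, abs_of_pos hp1']
      rw [mul_comm]
      apply mul_le_mul_of_nonneg_right _ hp1'.le
      simp only [hF, norm_smul]
      have hx1n : ‖Complex.exp (Complex.I *
          ((⟪E2 (polarCoord.symm p), x⟫ : ℝ) : ℂ))‖ = 1 := by
        rw [mul_comm, Complex.norm_exp_ofReal_mul_I]
      rw [hx1n, one_mul, norm_mul]
      have : ‖E2 (polarCoord.symm p)‖ = p.1 := hnormE p.1 p.2 hp1'
      rw [this]
      simp only [norm_neg, Complex.norm_I, one_mul]
      calc ‖h p.1‖ * ‖eThetaC (E2 (polarCoord.symm p))‖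
          ≤ ‖h p.1‖ * 1 := by
            exact mul_le_mul_of_nonneg_left (norm_eThetaC_le _) (norm_nonneg _)
        _ = ‖h p.1‖ := mul_one _
  -- assembling everything
  have e1 : (∫ ξ : EuclideanSpace ℝ (Fin 2), F ξ)
      = ∫ p in polarCoord.target, p.1 • F (E2 (polarCoord.symm p)) := by
    rw [← E2_mp.integral_comp E2.measurableEmbedding F,
      ← integral_comp_polarCoord_symm (fun p => F (E2 p))]
  have e2 : (∫ p in polarCoord.target, p.1 • F (E2 (polarCoord.symm p)))
      = ∫ ρ in Set.Ioi (0:ℝ), ∫ θ in Set.Ioo (-Real.pi) Real.pi,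
          ρ • F (E2 (polarCoord.symm (ρ, θ))) := by
    rw [polarCoord_target, MeasureTheory.Measure.volume_eq_prod,
      setIntegral_prod _ hInt]
  rw [e1, e2, setIntegral_congr_fun measurableSet_Ioi hInnerInt,
    _root_.integral_smul_const, MeasureTheory.integral_const_mul, ← smul_assoc]
  congr 1
  rw [Complex.real_smul]
  have hπ : ((Real.pi : ℂ)) ≠ 0 := Complex.ofReal_ne_zero.mpr Real.pi_ne_zero
  push_cast
  field_simp
  congr 1; funext a; rw [mul_comm ‖x‖ a]
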